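/- For words x, y over alphabet A and a subset B ⊆ A: π_B(x) = π_B(y) if and only if (π_B(y) ⊑ x and π_B(x) ⊑ y). -/

import Mathlib

theorem proj_eq_proj_iff {A : Type*} (B : Set A) [DecidablePred (· ∈ B)] (x y : List A) :
    x.filter (fun a => decide (a ∈ B)) = y.filter (fun a => decide (a ∈ B)) ↔
      ((y.filter (fun a => decide (a ∈ B))).Sublist x ∧
        (x.filter (fun a => decide (a ∈ B))).Sublist y) := by
  constructor
  · rintro h
    exact ⟨h ▸ List.filter_sublist (l := x), h ▸ List.filter_sublist (l := y)⟩
  · rintro ⟨h1, h2⟩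
    have a1 : (y.filter (fun a => decide (a ∈ B))).Sublist (x.filter (fun a => decide (a ∈ B))) := by
      simpa [List.filter_filter] using h1.filter (fun a => decide (a ∈ B))
    have a2 : (x.filter (fun a => decide (a ∈ B))).Sublist (y.filter (fun a => decide (a ∈ B))) := by
      simpa [List.filter_filter] using h2.filter (fun a => decide (a ∈ B))
    exact a2.antisymm a1
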